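/- Let X be a real Banach space equipped with a uniformly continuous duality selection map J with modulus of continuity ω. Let E ⊆ X, and let T : E → X satisfy: for all x, y ∈ E, |⟨Tx − Ty, J(x − y)⟩| ≤ ‖x − y‖² − ψ(‖x − y‖), where ψ : [0,∞) → [0,∞) is nondecreasing, positive on (0,∞), with ψ(0) = 0. Let P : X → X be a nonexpansive retraction onto E (P(X) ⊆ E, Px = x for x ∈ E, and ‖Px − Py‖ ≤ ‖x − y‖ for all x, y ∈ X), and let (x_n) be a sequence in E with x_{n+1} = P((1 − α_n)x_n + α_n T x_n), where (α_n) is a sequence in (0, α] with α_n → 0 with rate of convergence f and ∑_{n=0}^∞ α_n = ∞ with rate of divergence r. Let q ∈ E be a fixpoint of T, and suppose c₁, c₂ > 0 satisfy ‖x_n − q‖ ≤ c₁, ‖x_n − q‖² ≤ c₁, and ‖T x_n − x_n‖ ≤ c₂ for all n. Then for every ε > 0 and every n ≥ Φ(ε) := r(N((1/2)·min{2ψ(ε/√2), ε²/α}), 2∫_{ε²/2}^{c₁} dt/(2ψ(√t))) + 1, where N(δ) := f((1/c₂)·ω(c₁, δ/(4c₂))), we have ‖x_n − q‖ ≤ ε.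 -/

import Mathlib

open scoped BigOperators
section Aux

variable {X : Type*} [NormedAddCommGroup X] [NormedSpace ℝ X]

lemma star_ineq (J : X → StrongDual ℝ X)
    (hJ : ∀ x : X, J x x = ‖x‖ ^ 2 ∧ ‖J x‖ = ‖x‖) (p r : X) :
    ‖p‖ ^ 2 - ‖r‖ ^ 2 ≤ 2 * (J p) (p - r) := by
  have h1 : (J p) (p - r) = ‖p‖ ^ 2 - (J p) r := by
    rw [map_sub, (hJ p).1]
  have h2 : (J p) r ≤ ‖p‖ * ‖r‖ := by
    have h3 := (J p).le_opNorm r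
    rw [Real.norm_eq_abs] at h3
    have h4 : (J p) r ≤ |(J p) r| := le_abs_self _
    rw [(hJ p).2] at h3
    linarith
  nlinarith [sq_nonneg (‖p‖ - ‖r‖)]

lemma pair_bound (J : X → StrongDual ℝ X) (w u v : X) (c₂ η : ℝ)
    (hv : ‖v‖ ≤ c₂) (hη : 0 ≤ η) (hJd : ‖J w - J u‖ ≤ η) :
    (J w) v ≤ (J u) v + η * c₂ := by
  have h1 : (J w) v - (J u) v = (J w - J u) v := by
    simp [ContinuousLinearMap.sub_apply]
  have h2 := (J w - J u).le_opNorm v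
  rw [Real.norm_eq_abs] at h2
  have h3 : (J w - J u) v ≤ |(J w - J u) v| := le_abs_self _
  have h4 : ‖J w - J u‖ * ‖v‖ ≤ η * c₂ :=
    mul_le_mul hJd hv (norm_nonneg _) hη
  linarith [h1 ▸ (h3.trans (h2.trans h4))]

set_option maxHeartbeats 1000000 in
lemma step_dec (J : X → StrongDual ℝ X)
    (hJ : ∀ x : X, J x x = ‖x‖ ^ 2 ∧ ‖J x‖ = ‖x‖) (ω : ℝ → ℝ → ℝ)
    (hω : ∀ b ε : ℝ, 0 < b → 0 < ε → ∀ x y : X, ‖x‖ ≤ b → ‖y‖ ≤ b →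
      ‖x - y‖ ≤ ω b ε → ‖J x - J y‖ ≤ ε)
    (c₁ c₂ η a ψ₀ : ℝ) (hc₁ : 0 < c₁) (hc₂ : 0 < c₂) (hη : 0 < η) (ha : 0 < a)
    (u v : X) (hu : ‖u‖ ≤ c₁) (hv : ‖v‖ ≤ c₂)
    (haω : a * c₂ ≤ ω c₁ η)
    (hpair : (J u) v ≤ -ψ₀) (hψ₀ : 2 * (η * c₂) ≤ ψ₀) :
    ‖u + a • v‖ ^ 2 ≤ ‖u‖ ^ 2 - a * ψ₀ := by
  obtain ⟨p, hp⟩ : ∃ p : X, p = u + a • v := ⟨_, rfl⟩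
  rw [← hp]
  have hpu : p - u = a • v := by rw [hp]; abel
  have hav : ‖a • v‖ = a * ‖v‖ := by
    rw [norm_smul, Real.norm_eq_abs, abs_of_pos ha]
  have hdist : ‖p - u‖ ≤ a * c₂ := by
    rw [hpu, hav]
    exact mul_le_mul_of_nonneg_left hv ha.le
  by_cases hcase : ‖p‖ ≤ c₁
  · -- case A
    have hJd : ‖J p - J u‖ ≤ η := hω c₁ η hc₁ hη p u hcase hu (hdist.trans haω)
    have hJv : (J p) v ≤ -ψ₀ + η * c₂ := by
      have := pair_bound J p u v c₂ η hv hη.le hJd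
      linarith
    have hstar := star_ineq J hJ p u
    rw [hpu] at hstar
    have hsm : (J p) (a • v) = a * (J p) v := by
      rw [map_smul]; simp [smul_eq_mul]
    rw [hsm] at hstar
    nlinarith
  · -- case B : contradiction
    push_neg at hcase
    exfalso
    have hpn : (0:ℝ) < ‖p‖ := lt_trans hc₁ hcase
    obtain ⟨w, hw⟩ : ∃ w : X, w = (c₁ / ‖p‖) • p := ⟨_, rfl⟩
    have hwnorm : ‖w‖ = c₁ := by
      rw [hw, norm_smul, Real.norm_eq_abs, abs_of_pos (div_pos hc₁ hpn),
        div_mul_cancel₀ _ hpn.ne']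
    have hpnorm_le : ‖p‖ ≤ ‖u‖ + a * c₂ := by
      calc ‖p‖ = ‖u + a • v‖ := by rw [hp]
        _ ≤ ‖u‖ + ‖a • v‖ := norm_add_le _ _
        _ ≤ ‖u‖ + a * c₂ := by rw [hav]; nlinarith
    have hwp : ‖w - p‖ ≤ a * c₂ := by
      have h1 : w - p = (c₁ / ‖p‖ - 1) • p := by
        rw [hw, sub_smul, one_smul]
      have h2 : ‖w - p‖ = (1 - c₁ / ‖p‖) * ‖p‖ := by
        rw [h1, norm_smul, Real.norm_eq_abs, abs_of_neg (by
          have : c₁ / ‖p‖ < 1 := (div_lt_one hpn).mpr hcase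
          linarith)]
        ring
      rw [h2]
      have h3 : (1 - c₁ / ‖p‖) * ‖p‖ = ‖p‖ - c₁ := by field_simp
      rw [h3]; linarith
    have hwu : ‖w - u‖ ≤ 2 * (a * c₂) := by
      calc ‖w - u‖ ≤ ‖w - p‖ + ‖p - u‖ := norm_sub_le_norm_sub_add_norm_sub w p u
        _ ≤ 2 * (a * c₂) := by linarith
    obtain ⟨m, hm⟩ : ∃ m : X, m = (1/2 : ℝ) • (w + u) := ⟨_, rfl⟩
    have hmnorm : ‖m‖ ≤ c₁ := by
      rw [hm, norm_smul, Real.norm_eq_abs]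
      have := norm_add_le w u
      rw [abs_of_pos (by norm_num : (0:ℝ) < 1/2)]
      nlinarith [hwnorm, hu]
    have hmw : ‖w - m‖ ≤ a * c₂ := by
      have h1 : w - m = (1/2 : ℝ) • (w - u) := by
        rw [hm, smul_add, smul_sub]; module
      rw [h1, norm_smul, Real.norm_eq_abs, abs_of_pos (by norm_num : (0:ℝ) < 1/2)]
      linarith
    have hmu : ‖m - u‖ ≤ a * c₂ := by
      have h1 : m - u = (1/2 : ℝ) • (w - u) := by
        rw [hm, smul_add, smul_sub]; module
      rw [h1, norm_smul, Real.norm_eq_abs, abs_of_pos (by norm_num : (0:ℝ) < 1/2)]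
      linarith
    have h1 : ‖J w - J m‖ ≤ η :=
      hω c₁ η hc₁ hη w m hwnorm.le hmnorm (hmw.trans haω)
    have h2 : ‖J m - J u‖ ≤ η :=
      hω c₁ η hc₁ hη m u hmnorm hu (hmu.trans haω)
    have hJwu : ‖J w - J u‖ ≤ 2 * η := by
      calc ‖J w - J u‖ = ‖(J w - J m) + (J m - J u)‖ := by abel_nf
        _ ≤ ‖J w - J m‖ + ‖J m - J u‖ := norm_add_le _ _
        _ ≤ 2 * η := by linarith
    have hJwv : (J w) v ≤ -ψ₀ + 2 * η * c₂ := by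
      have := pair_bound J w u v c₂ (2*η) hv (by linarith) hJwu
      linarith
    -- star-hat inequality
    have hjp : (J w) p = c₁ * ‖p‖ := by
      have hpe : (‖p‖ / c₁) • w = p := by
        rw [hw, smul_smul]
        have hco : ‖p‖ / c₁ * (c₁ / ‖p‖) = 1 := by field_simp
        rw [hco, one_smul]
      calc (J w) p = (J w) ((‖p‖ / c₁) • w) := by rw [hpe]
        _ = (‖p‖ / c₁) * ((J w) w) := by rw [map_smul]; simp [smul_eq_mul]
        _ = (‖p‖ / c₁) * c₁ ^ 2 := by rw [(hJ w).1, hwnorm]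
        _ = c₁ * ‖p‖ := by field_simp
    have hju : (J w) u ≤ c₁ * ‖u‖ := by
      have h3 := (J w).le_opNorm u
      rw [Real.norm_eq_abs, (hJ w).2, hwnorm] at h3
      exact (le_abs_self _).trans h3
    have hsh : c₁ * (‖p‖ - ‖u‖) ≤ (J w) (p - u) := by
      rw [map_sub, hjp]
      have : c₁ * (‖p‖ - ‖u‖) = c₁ * ‖p‖ - c₁ * ‖u‖ := by ring
      linarith
    rw [hpu] at hsh
    have hsm : (J w) (a • v) = a * (J w) v := by
      rw [map_smul]; simp [smul_eq_mul]
    rw [hsm] at hsh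
    -- c₁ (‖p‖ − ‖u‖) ≤ a * (J w) v ≤ a(−ψ₀ + 2ηc₂) ≤ 0, so ‖p‖ ≤ ‖u‖ ≤ c₁ < ‖p‖
    nlinarith

set_option maxHeartbeats 1000000 in
/-- One-step lemma in the small regime. -/
lemma step_small (J : X → StrongDual ℝ X)
    (hJ : ∀ x : X, J x x = ‖x‖ ^ 2 ∧ ‖J x‖ = ‖x‖) (ω : ℝ → ℝ → ℝ)
    (hω : ∀ b ε : ℝ, 0 < b → 0 < ε → ∀ x y : X, ‖x‖ ≤ b → ‖y‖ ≤ b →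
      ‖x - y‖ ≤ ω b ε → ‖J x - J y‖ ≤ ε)
    (c₁ c₂ η a ψ₀ ε : ℝ) (hc₁ : 0 < c₁) (hc₂ : 0 < c₂) (hη : 0 < η) (ha : 0 < a)
    (hε : 0 < ε) (hεc₁ : ε < c₁)
    (u v : X) (hu : ‖u‖ ≤ c₁) (hv : ‖v‖ ≤ c₂)
    (haω : a * c₂ ≤ ω c₁ η)
    (hpair : (J u) v ≤ -ψ₀) (hψ₀ : 0 ≤ ψ₀)
    (hsmall : ‖u‖ ^ 2 ≤ ε ^ 2 / 2) (hbound : 2 * a * (η * c₂) ≤ ε ^ 2 / 4) :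
    ‖u + a • v‖ ^ 2 ≤ ε ^ 2 := by
  obtain ⟨k, hk, hkb⟩ : ∃ k : ℕ, 0 < k ∧ a * c₂ ≤ (k : ℝ) * (c₁ - ε) := by
    refine ⟨max 1 ⌈a * c₂ / (c₁ - ε)⌉₊, lt_of_lt_of_le one_pos (le_max_left _ _), ?_⟩
    have h1 : a * c₂ / (c₁ - ε) ≤ (⌈a * c₂ / (c₁ - ε)⌉₊ : ℝ) := Nat.le_ceil _
    have h2 : (⌈a * c₂ / (c₁ - ε)⌉₊ : ℝ) ≤ ((max 1 ⌈a * c₂ / (c₁ - ε)⌉₊ : ℕ) : ℝ) := by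
      exact_mod_cast le_max_right 1 _
    have h3 : 0 < c₁ - ε := by linarith
    calc a * c₂ = (a * c₂ / (c₁ - ε)) * (c₁ - ε) := by field_simp
      _ ≤ ((max 1 ⌈a * c₂ / (c₁ - ε)⌉₊ : ℕ) : ℝ) * (c₁ - ε) := by
          apply mul_le_mul_of_nonneg_right (h1.trans h2) h3.le
  have hk0 : (0:ℝ) < (k : ℝ) := by exact_mod_cast hk
  obtain ⟨s, hs_def⟩ : ∃ s : ℝ, s = a / k := ⟨_, rfl⟩
  have hs : 0 < s := hs_def ▸ div_pos ha hk0
  have hsk : (k : ℝ) * s = a := by rw [hs_def]; field_simp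
  obtain ⟨p, hp⟩ : ∃ p : ℕ → X, p = fun i : ℕ => u + ((i : ℝ) * s) • v := ⟨_, rfl⟩
  have hp0 : p 0 = u := by rw [hp]; simp
  have hpsucc : ∀ i : ℕ, p (i + 1) = p i + s • v := by
    intro i
    rw [hp]
    simp only
    push_cast
    rw [add_mul, one_mul, add_smul, add_assoc]
  have hpdist : ∀ i : ℕ, i ≤ k → ‖p i - u‖ ≤ a * c₂ := by
    intro i hik
    have : p i - u = ((i : ℝ) * s) • v := by rw [hp]; simp
    rw [this, norm_smul, Real.norm_eq_abs, abs_of_nonneg (by positivity)]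
    have h1 : (i : ℝ) ≤ (k : ℝ) := by exact_mod_cast hik
    calc (i : ℝ) * s * ‖v‖ ≤ (k : ℝ) * s * ‖v‖ := by
          apply mul_le_mul_of_nonneg_right _ (norm_nonneg v)
          exact mul_le_mul_of_nonneg_right h1 hs.le
      _ = a * ‖v‖ := by rw [hsk]
      _ ≤ a * c₂ := mul_le_mul_of_nonneg_left hv ha.le
  have key : ∀ i : ℕ, i ≤ k → ‖p i‖ ^ 2 ≤ ‖u‖ ^ 2 + (i : ℝ) * (2 * s * (η * c₂)) := by
    intro i
    induction i with
    | zero => intro _; rw [hp0]; simp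
    | succ i ih =>
      intro hik
      have hik' : i ≤ k := Nat.le_of_succ_le hik
      have hpi := ih hik'
      have hstep_bd : (i : ℝ) * (2 * s * (η * c₂)) ≤ 2 * a * (η * c₂) := by
        have h1 : (i : ℝ) ≤ (k : ℝ) := by exact_mod_cast hik'
        have h2 : (i : ℝ) * (2 * s * (η * c₂)) ≤ (k : ℝ) * (2 * s * (η * c₂)) := by
          apply mul_le_mul_of_nonneg_right h1 (by positivity)
        calc (i : ℝ) * (2 * s * (η * c₂)) ≤ (k : ℝ) * (2 * s * (η * c₂)) := h2
          _ = 2 * a * (η * c₂) := by rw [← hsk]; ring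
      have hpiε : ‖p i‖ ≤ ε := by
        have h1 : ‖p i‖ ^ 2 ≤ ε ^ 2 := by nlinarith
        nlinarith [norm_nonneg (p i)]
      have hpic : ‖p (i+1)‖ ≤ c₁ := by
        have h1 : ‖p (i+1)‖ ≤ ‖p i‖ + s * ‖v‖ := by
          rw [hpsucc i]
          calc ‖p i + s • v‖ ≤ ‖p i‖ + ‖s • v‖ := norm_add_le _ _
            _ = ‖p i‖ + s * ‖v‖ := by
                rw [norm_smul, Real.norm_eq_abs, abs_of_pos hs]
        have h2 : s * ‖v‖ ≤ c₁ - ε := by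
          have h3 : s * ‖v‖ ≤ s * c₂ := mul_le_mul_of_nonneg_left hv hs.le
          have h4 : s * c₂ = a * c₂ / k := by rw [hs_def]; ring
          have h5 : a * c₂ / k ≤ c₁ - ε := by
            rw [div_le_iff₀ hk0]
            calc a * c₂ ≤ (k : ℝ) * (c₁ - ε) := hkb
              _ = (c₁ - ε) * k := by ring
          linarith
        linarith
      have hJd : ‖J (p (i+1)) - J u‖ ≤ η :=
        hω c₁ η hc₁ hη (p (i+1)) u hpic hu ((hpdist (i+1) hik).trans haω)
      have hJv : (J (p (i+1))) v ≤ -ψ₀ + η * c₂ := by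
        have := pair_bound J (p (i+1)) u v c₂ η hv hη.le hJd
        linarith
      have hstar := star_ineq J hJ (p (i+1)) (p i)
      have hd : p (i+1) - p i = s • v := by rw [hpsucc i]; abel
      rw [hd] at hstar
      have hsm : (J (p (i+1))) (s • v) = s * (J (p (i+1))) v := by
        rw [map_smul]; simp [smul_eq_mul]
      rw [hsm] at hstar
      have : ‖p (i+1)‖ ^ 2 ≤ ‖p i‖ ^ 2 + 2 * s * (η * c₂) := by nlinarith
      push_cast
      nlinarith
  have hfin := key k le_rfl
  have hpk : p k = u + a • v := by
    rw [hp]; simp only; rw [hsk]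
  rw [hpk] at hfin
  have hlast : (k : ℝ) * (2 * s * (η * c₂)) = 2 * a * (η * c₂) := by
    rw [← hsk]; ring
  rw [hlast] at hfin
  nlinarith

end Aux

set_option maxHeartbeats 2000000 in
/-- Convergence with rate of the retracted Mann iteration for a d-weakly
contractive mapping T in a Banach space with a uniformly continuous duality selection
map J with modulus ω (quantitative version of Chidume–Zegeye–Aneke). -/
theorem stmt_13 {X : Type*} [NormedAddCommGroup X] [NormedSpace ℝ X] [CompleteSpace X]
    (J : X → StrongDual ℝ X) (ω : ℝ → ℝ → ℝ)
    (hJ : ∀ x : X, J x x = ‖x‖ ^ 2 ∧ ‖J x‖ = ‖x‖)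
    (hωpos : ∀ b ε : ℝ, 0 < b → 0 < ε → 0 < ω b ε)
    (hω : ∀ b ε : ℝ, 0 < b → 0 < ε → ∀ x y : X, ‖x‖ ≤ b → ‖y‖ ≤ b →
      ‖x - y‖ ≤ ω b ε → ‖J x - J y‖ ≤ ε)
    (E : Set X) (T : X → X) (ψ : ℝ → ℝ) (P : X → X)
    (a : ℕ → ℝ) (α : ℝ) (f : ℝ → ℕ) (r : ℕ → ℝ → ℕ) (q : X) (c₁ c₂ : ℝ) (x : ℕ → X)
    (hψmono : ∀ s t : ℝ, 0 ≤ s → s ≤ t → ψ s ≤ ψ t)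
    (hψpos : ∀ t : ℝ, 0 < t → 0 < ψ t) (hψ0 : ψ 0 = 0)
    (hT : ∀ y ∈ E, ∀ z ∈ E, |J (y - z) (T y - T z)| ≤ ‖y - z‖ ^ 2 - ψ ‖y - z‖)
    (hPrange : ∀ y : X, P y ∈ E) (hPid : ∀ y ∈ E, P y = y)
    (hPne : ∀ y z : X, ‖P y - P z‖ ≤ ‖y - z‖)
    (hxE : ∀ n, x n ∈ E)
    (hiter : ∀ n, x (n + 1) = P ((1 - a n) • x n + a n • T (x n)))
    (ha : ∀ n, 0 < a n) (hale : ∀ n, a n ≤ α)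
    (hf : ∀ ε : ℝ, 0 < ε → ∀ n, f ε ≤ n → a n ≤ ε)
    (hr : ∀ (M : ℕ) (y : ℝ), 0 < y →
      M ≤ r M y ∧ y < ∑ n ∈ Finset.Icc M (r M y), a n)
    (hqE : q ∈ E) (hfix : T q = q)
    (hc₁ : 0 < c₁) (hc₁b : ∀ n, ‖x n - q‖ ≤ c₁) (hc₁b' : ∀ n, ‖x n - q‖ ^ 2 ≤ c₁)
    (hc₂ : 0 < c₂) (hc₂b : ∀ n, ‖T (x n) - x n‖ ≤ c₂)
    (ε : ℝ) (hε : 0 < ε) (n : ℕ)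
    (hn : r (f ((1 / c₂) * ω c₁ ((1 / 2) * min (2 * ψ (ε / Real.sqrt 2)) (ε ^ 2 / α) / (4 * c₂))))
        (2 * ∫ t in (ε ^ 2 / 2)..c₁, 1 / (2 * ψ (Real.sqrt t))) + 1 ≤ n) :
    ‖x n - q‖ ≤ ε := by
  -- trivial exits
  rcases le_or_gt c₁ ε with hεc₁ | hεc₁
  · exact le_trans (hc₁b n) hεc₁
  rcases le_or_gt c₁ (ε ^ 2 / 2) with hhalf | hhalf
  · have h1 := hc₁b' n
    nlinarith [norm_nonneg (x n - q)]
  -- basic positivity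
  have hα : 0 < α := lt_of_lt_of_le (ha 0) (hale 0)
  have hsqrt2 : (0:ℝ) < Real.sqrt 2 := Real.sqrt_pos.mpr (by norm_num)
  have hψε : 0 < ψ (ε / Real.sqrt 2) := hψpos _ (div_pos hε hsqrt2)
  set δ : ℝ := (1 / 2) * min (2 * ψ (ε / Real.sqrt 2)) (ε ^ 2 / α) with hδdef
  have hδpos : 0 < δ := by
    rw [hδdef]
    have h1 : 0 < min (2 * ψ (ε / Real.sqrt 2)) (ε ^ 2 / α) :=
      lt_min (by linarith) (by positivity)
    linarith
  have hδ1 : δ ≤ ψ (ε / Real.sqrt 2) := by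
    rw [hδdef]
    have := min_le_left (2 * ψ (ε / Real.sqrt 2)) (ε ^ 2 / α)
    linarith
  have hδ2 : δ ≤ ε ^ 2 / (2 * α) := by
    rw [hδdef]
    have := min_le_right (2 * ψ (ε / Real.sqrt 2)) (ε ^ 2 / α)
    have h2 : (1:ℝ)/2 * (ε ^ 2 / α) = ε ^ 2 / (2 * α) := by ring
    nlinarith
  set η : ℝ := δ / (4 * c₂) with hηdef
  have hηpos : 0 < η := by rw [hηdef]; positivity
  have hδη : δ = 4 * (η * c₂) := by
    rw [hηdef]; field_simp
  set N : ℕ := f (1 / c₂ * ω c₁ η) with hNdef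
  set g : ℝ → ℝ := fun t => 1 / (2 * ψ (Real.sqrt t)) with hgdef
  set y : ℝ := 2 * ∫ t in (ε ^ 2 / 2)..c₁, g t with hydef
  have hn2 : r N y + 1 ≤ n := hn
  clear hn
  -- a_m * c₂ ≤ ω c₁ η for m ≥ N
  have hNa : ∀ m, N ≤ m → a m * c₂ ≤ ω c₁ η := by
    intro m hm
    have hωp : 0 < 1 / c₂ * ω c₁ η := by
      have := hωpos c₁ η hc₁ hηpos
      positivity
    have h1 : a m ≤ 1 / c₂ * ω c₁ η := hf _ hωp m hm
    calc a m * c₂ ≤ (1 / c₂ * ω c₁ η) * c₂ :=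
          mul_le_mul_of_nonneg_right h1 hc₂.le
      _ = ω c₁ η := by field_simp
  -- pairing inequality
  have hpairing : ∀ m, (J (x m - q)) (T (x m) - x m) ≤ - ψ ‖x m - q‖ := by
    intro m
    have h := hT (x m) (hxE m) q hqE
    rw [hfix] at h
    have h2 : (J (x m - q)) (T (x m) - x m)
        = (J (x m - q)) (T (x m) - q) - ‖x m - q‖ ^ 2 := by
      have h3 : T (x m) - x m = (T (x m) - q) - (x m - q) := by abel
      rw [h3, map_sub, (hJ (x m - q)).1]
    have h3 : (J (x m - q)) (T (x m) - q) ≤ ‖x m - q‖ ^ 2 - ψ ‖x m - q‖ :=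
      le_trans (le_abs_self _) h
    linarith
  have hψnonneg : ∀ t : ℝ, 0 ≤ t → 0 ≤ ψ t := by
    intro t ht
    have := hψmono 0 t le_rfl ht
    rw [hψ0] at this
    exact this
  -- iteration bound
  have hiterb : ∀ m, ‖x (m + 1) - q‖ ≤ ‖(x m - q) + a m • (T (x m) - x m)‖ := by
    intro m
    rw [hiter m]
    have hq : P q = q := hPid q hqE
    calc ‖P ((1 - a m) • x m + a m • T (x m)) - q‖
        = ‖P ((1 - a m) • x m + a m • T (x m)) - P q‖ := by rw [hq]
      _ ≤ ‖((1 - a m) • x m + a m • T (x m)) - q‖ := hPne _ _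
      _ = ‖(x m - q) + a m • (T (x m) - x m)‖ := by
          congr 1
          rw [sub_smul, one_smul, smul_sub]
          abel
  have hsqb : ∀ m, ‖x (m + 1) - q‖ ^ 2 ≤ ‖(x m - q) + a m • (T (x m) - x m)‖ ^ 2 :=
    fun m => pow_le_pow_left₀ (norm_nonneg _) (hiterb m) 2
  -- L1 : decrease step
  have L1 : ∀ m, N ≤ m → ε ^ 2 / 2 < ‖x m - q‖ ^ 2 →
      ‖x (m + 1) - q‖ ^ 2 ≤ ‖x m - q‖ ^ 2 - a m * ψ ‖x m - q‖ := by
    intro m hm hBm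
    have hεn : ε / Real.sqrt 2 ≤ ‖x m - q‖ := by
      by_contra hcon
      push_neg at hcon
      have h1 : ‖x m - q‖ ^ 2 < (ε / Real.sqrt 2) ^ 2 :=
        pow_lt_pow_left₀ hcon (norm_nonneg _) (by norm_num)
      have h2 : (ε / Real.sqrt 2) ^ 2 = ε ^ 2 / 2 := by
        rw [div_pow, Real.sq_sqrt (by norm_num : (0:ℝ) ≤ 2)]
      linarith
    have hψm : δ ≤ ψ ‖x m - q‖ := by
      have h1 : ψ (ε / Real.sqrt 2) ≤ ψ ‖x m - q‖ :=
        hψmono _ _ (le_of_lt (div_pos hε hsqrt2)) hεn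
      linarith
    have hstep := step_dec J hJ ω hω c₁ c₂ η (a m) (ψ ‖x m - q‖) hc₁ hc₂ hηpos (ha m)
      (x m - q) (T (x m) - x m) (hc₁b m) (hc₂b m) (hNa m hm) (hpairing m)
      (by nlinarith)
    exact le_trans (hsqb m) hstep
  -- L2 : small step
  have L2 : ∀ m, N ≤ m → ‖x m - q‖ ^ 2 ≤ ε ^ 2 / 2 → ‖x (m + 1) - q‖ ^ 2 ≤ ε ^ 2 := by
    intro m hm hBm
    have hbnd : 2 * a m * (η * c₂) ≤ ε ^ 2 / 4 := by
      have h1 : a m ≤ α := hale m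
      have h2 : η * c₂ = δ / 4 := by rw [hδη]; ring
      rw [h2]
      have h3 : a m * δ ≤ α * (ε ^ 2 / (2 * α)) := by
        apply mul_le_mul h1 hδ2 hδpos.le hα.le
      have h4 : α * (ε ^ 2 / (2 * α)) = ε ^ 2 / 2 := by field_simp
      nlinarith
    have hstep := step_small J hJ ω hω c₁ c₂ η (a m) (ψ ‖x m - q‖) ε hc₁ hc₂ hηpos
      (ha m) hε hεc₁ (x m - q) (T (x m) - x m) (hc₁b m) (hc₂b m) (hNa m hm)
      (hpairing m) (hψnonneg _ (norm_nonneg _)) hBm hbnd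
    exact le_trans (hsqb m) hstep
  -- integral machinery
  have hε2pos : (0:ℝ) < ε ^ 2 / 2 := by positivity
  have hganti : AntitoneOn g (Set.Icc (ε ^ 2 / 2) c₁) := by
    intro s hs t ht hst
    have hs0 : 0 < s := lt_of_lt_of_le hε2pos hs.1
    have hψs : 0 < ψ (Real.sqrt s) := hψpos _ (Real.sqrt_pos.mpr hs0)
    have h2 : ψ (Real.sqrt s) ≤ ψ (Real.sqrt t) :=
      hψmono _ _ (Real.sqrt_nonneg _) (Real.sqrt_le_sqrt hst)
    rw [hgdef]
    simp only
    apply one_div_le_one_div_of_le (by linarith)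
    linarith
  have hgnn : ∀ t ∈ Set.Icc (ε ^ 2 / 2) c₁, 0 ≤ g t := by
    intro t ht
    have ht0 : 0 < t := lt_of_lt_of_le hε2pos ht.1
    have := hψpos (Real.sqrt t) (Real.sqrt_pos.mpr ht0)
    rw [hgdef]
    positivity
  have hgint : ∀ x₁ x₂ : ℝ, ε ^ 2 / 2 ≤ x₁ → x₁ ≤ x₂ → x₂ ≤ c₁ →
      IntervalIntegrable g MeasureTheory.volume x₁ x₂ := by
    intro x₁ x₂ h1 h2 h3
    apply AntitoneOn.intervalIntegrable
    apply hganti.mono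
    rw [Set.uIcc_of_le h2]
    exact Set.Icc_subset_Icc h1 h3
  have hglb : ∀ x₁ x₂ : ℝ, ε ^ 2 / 2 ≤ x₁ → x₁ ≤ x₂ → x₂ ≤ c₁ →
      (x₂ - x₁) * g x₂ ≤ ∫ t in x₁..x₂, g t := by
    intro x₁ x₂ h1 h2 h3
    have hconst : (∫ _t in x₁..x₂, g x₂) = (x₂ - x₁) * g x₂ := by
      rw [intervalIntegral.integral_const, smul_eq_mul]
    rw [← hconst]
    apply intervalIntegral.integral_mono_on h2 intervalIntegrable_const
      (hgint x₁ x₂ h1 h2 h3)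
    intro t ht
    exact hganti ⟨le_trans h1 ht.1, le_trans ht.2 h3⟩ ⟨le_trans h1 h2, h3⟩ ht.2
  have hynn : 0 < y := by
    rw [hydef]
    have h1 := hglb (ε ^ 2 / 2) c₁ le_rfl hhalf.le le_rfl
    have hgc₁ : 0 < g c₁ := by
      have := hψpos (Real.sqrt c₁) (Real.sqrt_pos.mpr hc₁)
      rw [hgdef]
      positivity
    nlinarith
  obtain ⟨hNR, hry⟩ := hr N y hynn
  -- Claim 1
  have claim1 : ∃ m, (N ≤ m ∧ m ≤ r N y + 1) ∧ ‖x m - q‖ ^ 2 ≤ ε ^ 2 / 2 := by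
    by_contra hcon
    push_neg at hcon
    have hall : ∀ m, N ≤ m → m ≤ r N y + 1 → ε ^ 2 / 2 < ‖x m - q‖ ^ 2 := by
      intro m h1 h2
      exact hcon m ⟨h1, h2⟩
    have hdec : ∀ m, N ≤ m → m ≤ r N y →
        ‖x (m + 1) - q‖ ^ 2 ≤ ‖x m - q‖ ^ 2 - a m * ψ ‖x m - q‖ := by
      intro m h1 h2
      exact L1 m h1 (hall m h1 (le_trans h2 (Nat.le_succ _)))
    have hψposm : ∀ m, N ≤ m → m ≤ r N y + 1 → 0 < ψ ‖x m - q‖ := by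
      intro m h1 h2
      apply hψpos
      have := hall m h1 h2
      nlinarith [norm_nonneg (x m - q)]
    have hstepint : ∀ m, N ≤ m → m ≤ r N y →
        a m ≤ 2 * ∫ t in (‖x (m+1) - q‖ ^ 2)..(‖x m - q‖ ^ 2), g t := by
      intro m h1 h2
      have hψm := hψposm m h1 (le_trans h2 (Nat.le_succ _))
      have hd := hdec m h1 h2
      have hBm1 : ε ^ 2 / 2 < ‖x (m+1) - q‖ ^ 2 :=
        hall (m+1) (le_trans h1 (Nat.le_succ _)) (by omega)
      have hBmc : ‖x m - q‖ ^ 2 ≤ c₁ := hc₁b' m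
      have h21 : ‖x (m+1) - q‖ ^ 2 ≤ ‖x m - q‖ ^ 2 := by
        nlinarith [mul_pos (ha m) hψm]
      have hgBm : g (‖x m - q‖ ^ 2) = 1 / (2 * ψ ‖x m - q‖) := by
        rw [hgdef]
        simp only
        rw [Real.sqrt_sq (norm_nonneg _)]
      have hint := hglb (‖x (m+1) - q‖ ^ 2) (‖x m - q‖ ^ 2) hBm1.le h21 hBmc
      rw [hgBm] at hint
      have hkey : a m / 2 ≤ ∫ t in (‖x (m+1) - q‖ ^ 2)..(‖x m - q‖ ^ 2), g t := by
        have e1 : a m / 2 = (a m * ψ ‖x m - q‖) * (1 / (2 * ψ ‖x m - q‖)) := by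
          field_simp
        rw [e1]
        calc (a m * ψ ‖x m - q‖) * (1 / (2 * ψ ‖x m - q‖))
            ≤ (‖x m - q‖ ^ 2 - ‖x (m+1) - q‖ ^ 2) * (1 / (2 * ψ ‖x m - q‖)) := by
              apply mul_le_mul_of_nonneg_right (by linarith) (by positivity)
          _ ≤ _ := hint
      linarith
    -- chain: B (N + j) ≤ B N
    have hchain : ∀ j, N + j ≤ r N y + 1 → ‖x (N + j) - q‖ ^ 2 ≤ ‖x N - q‖ ^ 2 := by
      intro j
      induction j with
      | zero => intro _; simp
      | succ j ih =>
        intro hj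
        have hj' : N + j ≤ r N y + 1 := by omega
        have h2 : N + j ≤ r N y := by omega
        have hd := hdec (N + j) (by omega) h2
        have hih := ih hj'
        have hψnn : 0 ≤ a (N + j) * ψ ‖x (N + j) - q‖ :=
          mul_nonneg (ha (N + j)).le (hψnonneg _ (norm_nonneg _))
        have : x (N + j + 1) = x (N + (j + 1)) := by ring_nf
        rw [this] at hd
        linarith
    -- telescoping
    set n' : ℕ := r N y + 1 - N with hn'def
    have hNn' : N + n' = r N y + 1 := by omega
    have hint_seg : ∀ j, j < n' → IntervalIntegrable g MeasureTheory.volume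
        (‖x (N + j) - q‖ ^ 2) (‖x (N + (j + 1)) - q‖ ^ 2) := by
      intro j hj
      have h1 : N + j ≤ r N y := by omega
      have hd := hdec (N + j) (by omega) h1
      have hord : ‖x (N + j + 1) - q‖ ^ 2 ≤ ‖x (N + j) - q‖ ^ 2 := by
        have hψnn : 0 ≤ a (N + j) * ψ ‖x (N + j) - q‖ :=
          mul_nonneg (ha (N + j)).le (hψnonneg _ (norm_nonneg _))
        linarith
      have hlow : ε ^ 2 / 2 ≤ ‖x (N + j + 1) - q‖ ^ 2 :=
        (hall (N + j + 1) (by omega) (by omega)).le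
      exact (hgint _ _ hlow hord (hc₁b' (N + j))).symm
    have htel : ∑ j ∈ Finset.range n',
        (∫ t in (‖x (N + j) - q‖ ^ 2)..(‖x (N + (j + 1)) - q‖ ^ 2), g t)
        = ∫ t in (‖x N - q‖ ^ 2)..(‖x (N + n') - q‖ ^ 2), g t :=
      intervalIntegral.sum_integral_adjacent_intervals
        (f := g) (μ := MeasureTheory.volume) (a := fun j => ‖x (N + j) - q‖ ^ 2)
        (n := n') (fun k hk => hint_seg k hk)
    have hsum1 : ∑ m ∈ Finset.Icc N (r N y), a m = ∑ j ∈ Finset.range n', a (N + j) := by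
      rw [← Finset.Ico_add_one_right_eq_Icc, Finset.sum_Ico_eq_sum_range]
    have hterm : ∀ j ∈ Finset.range n', a (N + j) ≤
        2 * (- ∫ t in (‖x (N + j) - q‖ ^ 2)..(‖x (N + (j + 1)) - q‖ ^ 2), g t) := by
      intro j hj
      rw [Finset.mem_range] at hj
      have h1 := hstepint (N + j) (by omega) (by omega)
      have h2 : (∫ t in (‖x (N + j) - q‖ ^ 2)..(‖x (N + (j + 1)) - q‖ ^ 2), g t)
          = - ∫ t in (‖x (N + (j + 1)) - q‖ ^ 2)..(‖x (N + j) - q‖ ^ 2), g t :=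
        intervalIntegral.integral_symm _ _
      rw [h2, neg_neg]
      exact h1
    have hsumle : ∑ m ∈ Finset.Icc N (r N y), a m ≤ y := by
      rw [hsum1]
      have hs2 : ∑ j ∈ Finset.range n', a (N + j)
          ≤ ∑ j ∈ Finset.range n',
            2 * (- ∫ t in (‖x (N + j) - q‖ ^ 2)..(‖x (N + (j + 1)) - q‖ ^ 2), g t) :=
        Finset.sum_le_sum hterm
      have hs3 : ∑ j ∈ Finset.range n',
          2 * (- ∫ t in (‖x (N + j) - q‖ ^ 2)..(‖x (N + (j + 1)) - q‖ ^ 2), g t)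
          = 2 * (- ∑ j ∈ Finset.range n',
            ∫ t in (‖x (N + j) - q‖ ^ 2)..(‖x (N + (j + 1)) - q‖ ^ 2), g t) := by
        rw [← Finset.sum_neg_distrib, Finset.mul_sum]
      rw [hs3, htel] at hs2
      -- now: ∑ ≤ 2 * (− ∫_{B N}^{B (N+n')} g) = 2 ∫_{B(N+n')}^{B N} g ≤ 2 ∫_{ε²/2}^{c₁} g = y
      have hA : ε ^ 2 / 2 ≤ ‖x (N + n') - q‖ ^ 2 :=
        (hall (N + n') (by omega) (by omega)).le
      have hBc : ‖x N - q‖ ^ 2 ≤ c₁ := hc₁b' N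
      have hAB : ‖x (N + n') - q‖ ^ 2 ≤ ‖x N - q‖ ^ 2 := hchain n' (by omega)
      have i1 : IntervalIntegrable g MeasureTheory.volume (ε ^ 2 / 2) (‖x (N + n') - q‖ ^ 2) :=
        hgint _ _ le_rfl hA (le_trans hAB hBc)
      have i2 : IntervalIntegrable g MeasureTheory.volume (‖x (N + n') - q‖ ^ 2) (‖x N - q‖ ^ 2) :=
        hgint _ _ hA hAB hBc
      have i3 : IntervalIntegrable g MeasureTheory.volume (‖x N - q‖ ^ 2) c₁ :=
        hgint _ _ (le_trans hA hAB) hBc le_rfl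
      have e2 := intervalIntegral.integral_add_adjacent_intervals (i1.trans i2) i3
      have e1 := intervalIntegral.integral_add_adjacent_intervals i1 i2
      have p1 : 0 ≤ ∫ t in (ε ^ 2 / 2)..(‖x (N + n') - q‖ ^ 2), g t :=
        intervalIntegral.integral_nonneg hA
          (fun u hu => hgnn u ⟨hu.1, le_trans hu.2 (le_trans hAB hBc)⟩)
      have p3 : 0 ≤ ∫ t in (‖x N - q‖ ^ 2)..c₁, g t :=
        intervalIntegral.integral_nonneg hBc
          (fun u hu => hgnn u ⟨le_trans (le_trans hA hAB) hu.1, hu.2⟩)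
      have hsymm : (∫ t in (‖x N - q‖ ^ 2)..(‖x (N + n') - q‖ ^ 2), g t)
          = - ∫ t in (‖x (N + n') - q‖ ^ 2)..(‖x N - q‖ ^ 2), g t :=
        intervalIntegral.integral_symm _ _
      rw [hydef]
      rw [hsymm] at hs2
      linarith
    linarith
  obtain ⟨m₀, ⟨hm₀1, hm₀2⟩, hm₀B⟩ := claim1
  -- Claim 2 : propagate
  have claim2 : ∀ j, m₀ ≤ j → ‖x j - q‖ ^ 2 ≤ ε ^ 2 := by
    intro j hj
    induction j, hj using Nat.le_induction with
    | base => nlinarith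
    | succ j hj ih =>
      by_cases hc : ‖x j - q‖ ^ 2 ≤ ε ^ 2 / 2
      · exact L2 j (le_trans hm₀1 hj) hc
      · push_neg at hc
        have h1 := L1 j (le_trans hm₀1 hj) hc
        have h2 : 0 ≤ a j * ψ ‖x j - q‖ :=
          mul_nonneg (ha j).le (hψnonneg _ (norm_nonneg _))
        linarith
  have hBn : ‖x n - q‖ ^ 2 ≤ ε ^ 2 := claim2 n (by omega)
  nlinarith [norm_nonneg (x n - q)]
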